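/- Let E be a lattice-ordered effect algebra. Then E is an MV-effect algebra if and only if for all a, b ∈ E there exist a₁, b₁, c ∈ E such that a₁ ⊕ b₁ ⊕ c is defined, a₁ ⊕ c = a, and b₁ ⊕ c = b. -/
import Mathlib


/-- An effect algebra: a partial algebra `(α; ⊕, 0, 1)`.  The partial operation is
encoded by a total function `add` together with a definedness predicate `D`. -/
structure EffectAlgebra (α : Type*) where
  D : α → α → Prop
  add : α → α → α
  zero : α
  one : α
  comm_def : ∀ a b, D a b → D b a
  comm : ∀ a b, D a b → add a b = add b a
  assoc_def₁ : ∀ a b c, D a b → D (add a b) c → D b c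
  assoc_def₂ : ∀ a b c, D a b → D (add a b) c → D a (add b c)
  assoc : ∀ a b c, D a b → D (add a b) c → add (add a b) c = add a (add b c)
  orth_exists : ∀ a, ∃! b, D a b ∧ add a b = one
  add_one : ∀ a, D a one → a = zero

namespace EffectAlgebra

variable {α : Type*}
open Classical

/-- The induced order: `a ≤ b` iff `∃ c, a ⊕ c = b`. -/
def le (E : EffectAlgebra α) (a b : α) : Prop := ∃ c, E.D a c ∧ E.add a c = b

/-- The orthosupplement `a'`. -/
noncomputable def orth (E : EffectAlgebra α) (a : α) : α := (E.orth_exists a).choose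

/-- Partial difference: `sub b a = b ⊖ a`, intended for `a ≤ b`. -/
noncomputable def sub (E : EffectAlgebra α) (b a : α) : α :=
  if h : ∃ c, E.D a c ∧ E.add a c = b then h.choose else E.zero

end EffectAlgebra
namespace EffectAlgebra

variable {α : Type*} {E : EffectAlgebra α} {a b c x y : α}

lemma Dsw (h : E.D a b) : E.D b a := E.comm_def _ _ h

lemma addc (h : E.D a b) : E.add a b = E.add b a := E.comm _ _ h

lemma D23 (h1 : E.D a b) (h2 : E.D (E.add a b) c) : E.D b c := E.assoc_def₁ _ _ _ h1 h2

lemma D1_23 (h1 : E.D a b) (h2 : E.D (E.add a b) c) : E.D a (E.add b c) :=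
  E.assoc_def₂ _ _ _ h1 h2

lemma D13 (h1 : E.D a b) (h2 : E.D (E.add a b) c) : E.D a c := by
  have h2' : E.D (E.add b a) c := by rwa [addc h1] at h2
  exact D23 (Dsw h1) h2'

lemma unassoc (hbc : E.D b c) (h : E.D a (E.add b c)) :
    E.D a b ∧ E.D (E.add a b) c ∧ E.add (E.add a b) c = E.add a (E.add b c) := by
  have h' := Dsw h
  have hca := D23 hbc h'
  have hb := D1_23 hbc h'
  have hab : E.D a b := D23 hca (Dsw hb)
  have hc : E.D (E.add a b) c := Dsw (D1_23 hca (Dsw hb))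
  exact ⟨hab, hc, E.assoc _ _ _ hab hc⟩

lemma orth_D : E.D a (E.orth a) := (E.orth_exists a).choose_spec.1.1

lemma orth_add : E.add a (E.orth a) = E.one := (E.orth_exists a).choose_spec.1.2

lemma orth_unique (h1 : E.D a b) (h2 : E.add a b = E.one) : b = E.orth a :=
  (E.orth_exists a).choose_spec.2 b ⟨h1, h2⟩

lemma one_zero : E.D E.one E.zero ∧ E.add E.one E.zero = E.one := by
  have h1 : E.D E.one (E.orth E.one) := orth_D
  have h2 : E.add E.one (E.orth E.one) = E.one := orth_add
  have h3 : E.orth E.one = E.zero := E.add_one _ (Dsw h1)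
  rw [h3] at h1 h2; exact ⟨h1, h2⟩

lemma orth_zero (a : α) :
    E.D (E.orth a) E.zero ∧ E.add (E.orth a) E.zero = E.orth a := by
  have ho := one_zero (E := E)
  have h2 : E.D (E.add a (E.orth a)) E.zero := by rw [orth_add]; exact ho.1
  have hD := D23 orth_D h2
  have hD2 := D1_23 orth_D h2
  have he : E.add a (E.add (E.orth a) E.zero) = E.one := by
    rw [← E.assoc _ _ _ orth_D h2, orth_add]; exact ho.2
  exact ⟨hD, orth_unique hD2 he⟩

lemma orth_orth : E.orth (E.orth a) = a :=
  (orth_unique (Dsw orth_D) (by rw [← addc orth_D]; exact orth_add)).symm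

lemma zero_D : E.D a E.zero := by
  have := (orth_zero (E := E) (E.orth a)).1
  rwa [orth_orth] at this

lemma add_zero' : E.add a E.zero = a := by
  have := (orth_zero (E := E) (E.orth a)).2
  rwa [orth_orth] at this

lemma zero_add' : E.add E.zero a = a := by rw [← addc zero_D, add_zero']

lemma cancel_aux (h1 : E.D a b) (h2 : E.D (E.add a b) c)
    (h3 : E.add (E.add a b) c = E.one) : b = E.orth (E.add c a) := by
  have hbc := D23 h1 h2
  have habc := D1_23 h1 h2
  have e1 : E.add a (E.add b c) = E.one := by rw [← E.assoc _ _ _ h1 h2]; exact h3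
  have h4 : E.D (E.add b c) a := Dsw habc
  have e2 : E.add (E.add b c) a = E.one := by rw [← addc habc]; exact e1
  have h5 := D1_23 hbc h4
  have e3 : E.add b (E.add c a) = E.one := by rw [← E.assoc _ _ _ hbc h4]; exact e2
  exact orth_unique (Dsw h5) (by rw [← addc h5]; exact e3)

lemma cancel (h1 : E.D a b) (h2 : E.D a c) (h : E.add a b = E.add a c) : b = c := by
  have hx' : E.D (E.add a b) (E.orth (E.add a b)) := orth_D
  have hx1 : E.add (E.add a b) (E.orth (E.add a b)) = E.one := orth_add
  have hb := cancel_aux h1 hx' hx1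
  have hx'' : E.D (E.add a c) (E.orth (E.add a b)) := by rw [← h]; exact hx'
  have hx2 : E.add (E.add a c) (E.orth (E.add a b)) = E.one := by rw [← h]; exact hx1
  have hc := cancel_aux h2 hx'' hx2
  rw [hb, hc]

lemma le_refl' : E.le a a := ⟨E.zero, zero_D, add_zero'⟩

lemma le_trans' (h1 : E.le a b) (h2 : E.le b c) : E.le a c := by
  obtain ⟨u, hu, eu⟩ := h1; obtain ⟨v, hv, ev⟩ := h2
  have hv' : E.D (E.add a u) v := eu ▸ hv
  exact ⟨E.add u v, D1_23 hu hv', by rw [← E.assoc _ _ _ hu hv', eu, ev]⟩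

lemma le_zero_eq (h : E.le a E.zero) : a = E.zero := by
  obtain ⟨u, hu, e⟩ := h
  have h1 : E.D (E.add a u) E.one := by
    rw [e]; exact Dsw (zero_D (a := E.one))
  have hu1 := E.add_one u (D23 hu h1)
  rw [← e, hu1, add_zero']

lemma le_antisymm' (h1 : E.le a b) (h2 : E.le b a) : a = b := by
  obtain ⟨u, hu, eu⟩ := h1; obtain ⟨v, hv, ev⟩ := h2
  have hv' : E.D (E.add a u) v := eu ▸ hv
  have he : E.add a (E.add u v) = E.add a E.zero := by
    rw [← E.assoc _ _ _ hu hv', eu, ev, add_zero']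
  have huv := cancel (D1_23 hu hv') zero_D he
  have hu0 : u = E.zero := le_zero_eq ⟨v, D23 hu hv', huv⟩
  rw [← eu, hu0, add_zero']

lemma sub_eq (h1 : E.D a c) (h2 : E.add a c = b) : E.sub b a = c := by
  have hex : ∃ c, E.D a c ∧ E.add a c = b := ⟨c, h1, h2⟩
  rw [EffectAlgebra.sub, dif_pos hex]
  exact cancel hex.choose_spec.1 h1 (hex.choose_spec.2.trans h2.symm)

lemma D_of_le_left (h : E.le x a) (hD : E.D a b) : E.D x b := by
  obtain ⟨w, hw, e⟩ := h
  have hD' : E.D (E.add x w) b := e ▸ hD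
  exact D13 hw hD'

lemma D_of_le_right (h : E.le y b) (hD : E.D a b) : E.D a y :=
  Dsw (D_of_le_left h (Dsw hD))

lemma add_le_add_left' (h : E.le x y) (hD : E.D c y) : E.le (E.add c x) (E.add c y) := by
  obtain ⟨w, hw, e⟩ := h
  have hD' : E.D c (E.add x w) := by rw [e]; exact hD
  obtain ⟨hcx, hcxw, eq⟩ := unassoc hw hD'
  exact ⟨w, hcxw, by rw [eq, e]⟩

lemma le_add_cancel_left (hx : E.D c x) (hy : E.D c y)
    (h : E.le (E.add c x) (E.add c y)) : E.le x y := by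
  obtain ⟨w, hw, e⟩ := h
  rw [E.assoc _ _ _ hx hw] at e
  exact ⟨w, D23 hx hw, cancel (D1_23 hx hw) hy e⟩

end EffectAlgebra

/-- a lattice-ordered effect algebra is an MV-effect algebra iff every
pair `a, b` has a common refinement `a = a₁ ⊕ c`, `b = b₁ ⊕ c` with `a₁ ⊕ b₁ ⊕ c` defined. -/
theorem stmt3 {α : Type*} (E : EffectAlgebra α) (sup inf : α → α → α)
    (hsup : ∀ a b : α, E.le a (sup a b) ∧ E.le b (sup a b) ∧
      ∀ c, E.le a c → E.le b c → E.le (sup a b) c)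
    (hinf : ∀ a b : α, E.le (inf a b) a ∧ E.le (inf a b) b ∧
      ∀ c, E.le c a → E.le c b → E.le c (inf a b)) :
    (∀ a b : α, E.sub (sup a b) a = E.sub b (inf a b)) ↔
      (∀ a b : α, ∃ a₁ b₁ c : α, E.D a₁ b₁ ∧ E.D (E.add a₁ b₁) c ∧
        E.D a₁ c ∧ E.D b₁ c ∧ E.add a₁ c = a ∧ E.add b₁ c = b) := by
  open EffectAlgebra in
  constructor
  · intro hMV a b
    obtain ⟨p, hp1, hp2⟩ := (hinf a b).1
    obtain ⟨q, hq1, hq2⟩ := (hinf a b).2.1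
    obtain ⟨r, hr1, hr2⟩ := (hsup a b).1
    have e1 : E.sub (sup a b) a = r := sub_eq hr1 hr2
    have e2 : E.sub b (inf a b) = q := sub_eq hq1 hq2
    have hrq : r = q := e1.symm.trans ((hMV a b).trans e2)
    rw [← hrq] at hq1 hq2
    have hDq : E.D (E.add (inf a b) p) r := by rw [hp2]; exact hr1
    refine ⟨p, r, inf a b, D23 hp1 hDq, Dsw (D1_23 hp1 hDq), Dsw hp1, Dsw hq1, ?_, ?_⟩
    · rw [← addc hp1]; exact hp2
    · rw [← addc hq1]; exact hq2
  · intro H a b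
    obtain ⟨a₁, b₁, c, h1, h2, h3, h4, h5, h6⟩ := H a b
    obtain ⟨p, hp1, hp2⟩ := (hinf a b).1
    obtain ⟨q, hq1, hq2⟩ := (hinf a b).2.1
    obtain ⟨t, ht1, ht2⟩ := (hsup a b).1
    obtain ⟨t', ht'1, ht'2⟩ := (hsup a b).2.1
    have hca : E.le c a := ⟨a₁, Dsw h3, by rw [← addc h3]; exact h5⟩
    have hcb : E.le c b := ⟨b₁, Dsw h4, by rw [← addc h4]; exact h6⟩
    obtain ⟨d, hd1, hd2⟩ := (hinf a b).2.2 c hca hcb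
    set m := inf a b with hm
    set s := sup a b with hs
    -- facts about u = a₁ ⊕ b₁ ⊕ c
    have hub : E.D a₁ (E.add b₁ c) := D1_23 h1 h2
    have hDab₁ : E.D a₁ b := by rw [← h6]; exact hub
    have h1' : E.D (E.add b₁ a₁) c := by rw [← addc h1]; exact h2
    have hub' : E.D b₁ (E.add a₁ c) := D1_23 (Dsw h1) h1'
    have hDb₁a : E.D b₁ a := by rw [← h5]; exact hub'
    -- a₁ = d ⊕ p and b₁ = d ⊕ q
    have hmp' : E.D (E.add c d) p := by rw [hd2]; exact hp1
    have ea : E.add c (E.add d p) = E.add c a₁ := by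
      rw [← E.assoc _ _ _ hd1 hmp', hd2, hp2, ← addc h3]; exact h5.symm
    have ha₁ : a₁ = E.add d p := cancel (Dsw h3) (D1_23 hd1 hmp') ea.symm
    have hmq' : E.D (E.add c d) q := by rw [hd2]; exact hq1
    have eb : E.add c (E.add d q) = E.add c b₁ := by
      rw [← E.assoc _ _ _ hd1 hmq', hd2, hq2, ← addc h4]; exact h6.symm
    have hb₁ : b₁ = E.add d q := cancel (Dsw h4) (D1_23 hd1 hmq') eb.symm
    have hdp := D23 hd1 hmp'
    have hpa₁ : E.le p a₁ := ⟨d, Dsw hdp, by rw [← addc hdp]; exact ha₁.symm⟩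
    have hdq := D23 hd1 hmq'
    have hqb₁ : E.le q b₁ := ⟨d, Dsw hdq, by rw [← addc hdq]; exact hb₁.symm⟩
    -- key definedness facts
    have hDaq : E.D a q := D_of_le_right hqb₁ (Dsw hDb₁a)
    have hDbp : E.D b p := D_of_le_right hpa₁ (Dsw hDab₁)
    have hDpq : E.D p q := D_of_le_right hqb₁ (D_of_le_left hpa₁ h1)
    -- a ⊕ q = b ⊕ p
    have hDaq' : E.D (E.add m p) q := by rw [hp2]; exact hDaq
    have hDm_qp : E.D m (E.add q p) := by
      have h' := D1_23 hp1 hDaq'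
      rwa [addc hDpq] at h'
    obtain ⟨hmq2, hmq3, eassoc⟩ := unassoc (Dsw hDpq) hDm_qp
    have key : E.add a q = E.add b p := by
      rw [← hp2, ← hq2, E.assoc _ _ _ hp1 hDaq', addc hDpq, ← eassoc]
    -- s ≤ a ⊕ q, with remainder r
    have hs_le : E.le s (E.add a q) := by
      have h' := (hsup a b).2.2 _ ⟨q, hDaq, rfl⟩ ⟨p, hDbp, key.symm⟩
      rwa [← hs] at h'
    obtain ⟨r, hr1, hr2⟩ := hs_le
    -- r ≤ q
    have hDatr : E.D (E.add a t) r := by rw [ht2]; exact hr1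
    have etr : E.add a (E.add t r) = E.add a q := by
      rw [← E.assoc _ _ _ ht1 hDatr, ht2]; exact hr2
    have htr_q : E.add t r = q := cancel (D1_23 ht1 hDatr) hDaq etr
    have hDtr := D23 ht1 hDatr
    have hrq : E.le r q := ⟨t, Dsw hDtr, by rw [← addc hDtr]; exact htr_q⟩
    -- r ≤ p
    have hDbt'r : E.D (E.add b t') r := by rw [ht'2]; exact hr1
    have et'r : E.add b (E.add t' r) = E.add b p := by
      rw [← E.assoc _ _ _ ht'1 hDbt'r, ht'2, hr2]; exact key
    have ht'r_p : E.add t' r = p := cancel (D1_23 ht'1 hDbt'r) hDbp et'r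
    have hDt'r := D23 ht'1 hDbt'r
    have hrp : E.le r p := ⟨t', Dsw hDt'r, by rw [← addc hDt'r]; exact ht'r_p⟩
    -- m ⊕ r ≤ m, hence r = 0
    have hle_a : E.le (E.add m r) a := by
      have h' := add_le_add_left' hrp hp1
      rwa [hp2] at h'
    have hle_b : E.le (E.add m r) b := by
      have h' := add_le_add_left' hrq hq1
      rwa [hq2] at h'
    have hle_m : E.le (E.add m r) m := by
      have h' := (hinf a b).2.2 _ hle_a hle_b
      rwa [← hm] at h'
    have hDmr : E.D m r := D_of_le_right hrp hp1
    have hr0 : r = E.zero := by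
      apply le_zero_eq
      apply le_add_cancel_left hDmr (zero_D (a := m))
      rwa [add_zero']
    have final : E.add a q = s := by rw [← hr2, hr0, add_zero']
    rw [sub_eq hDaq final, sub_eq hq1 hq2]
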